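/- arXiv:1409.3601 — 4 statements merged into one kernel-verified Lean document; each statement's English description precedes it below -/
import Mathlib

section
/- Let $X$ have density $f$ on $\mathbb{R}^d$, and define $Z(v) = \mu\{x : f(x) > v\}$ (Lebesgue measure of the superlevel set), assumed differentiable. Then the random variable $Y = f(X)$, the vertical density ordinate, has density $g(v) = -v\, Z'(v)$. -/
open MeasureTheory Set Filter Topology

/-- Troutt's vertical-density representation: if `X` has density `f` on `ℝ^d` and
`Z(v) = μ{x : f(x) > v}` (Lebesgue measure of the superlevel set) is differentiable, then the
vertical density ordinate `Y = f(X)` has density `g(v) = -v Z'(v)`. -/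
theorem vertical_density_representation (d : ℕ)
    (f : (Fin d → ℝ) → ℝ) (hf : Measurable f) (hfnn : ∀ x, 0 ≤ f x)
    (hfdens : ∫⁻ x, ENNReal.ofReal (f x) = 1)
    (Z Z' : ℝ → ℝ) (hZ : ∀ v, Z v = (volume {x | v < f x}).toReal)
    (hZ' : ∀ v, 0 < v → HasDerivAt Z (Z' v) v) :
    Measure.map f (volume.withDensity fun x => ENNReal.ofReal (f x))
      = volume.withDensity fun v =>
          (Ioi (0 : ℝ)).indicator (fun v => ENNReal.ofReal (-(v * Z' v))) v := by
  classical
  set μf : Measure (Fin d → ℝ) := volume.withDensity fun x => ENNReal.ofReal (f x) with hμfdef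
  set ρ : Measure ℝ := volume.withDensity (fun v =>
          (Ioi (0 : ℝ)).indicator (fun v => ENNReal.ofReal (-(v * Z' v))) v) with hρdef
  have hmeas : ∀ v : ℝ, MeasurableSet {x | v < f x} := fun v =>
    measurableSet_lt measurable_const hf
  -- finiteness of superlevel sets
  have hfin : ∀ v : ℝ, 0 < v → volume {x | v < f x} ≠ ⊤ := by
    intro v hv
    have h1 : volume {x | v < f x} ≤ (∫⁻ x, ENNReal.ofReal (f x)) / ENNReal.ofReal v := by
      refine le_trans (measure_mono ?_)
        (meas_ge_le_lintegral_div (hf.ennreal_ofReal).aemeasurable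
          (by simpa [ENNReal.ofReal_eq_zero] using hv) ENNReal.ofReal_ne_top)
      intro x hx
      exact ENNReal.ofReal_le_ofReal (le_of_lt hx)
    rw [hfdens] at h1
    exact ne_top_of_le_ne_top
      (ENNReal.div_lt_top ENNReal.one_ne_top (by simpa [ENNReal.ofReal_eq_zero] using hv)).ne h1
  have hofZ : ∀ v : ℝ, 0 < v → ENNReal.ofReal (Z v) = volume {x | v < f x} := by
    intro v hv
    rw [hZ v]
    exact ENNReal.ofReal_toReal (hfin v hv)
  have hZnn : ∀ v, 0 ≤ Z v := fun v => by rw [hZ v]; exact ENNReal.toReal_nonneg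
  -- Z is antitone on positive reals
  have hZanti : ∀ u v : ℝ, 0 < u → u ≤ v → Z v ≤ Z u := by
    intro u v hu huv
    rw [hZ u, hZ v]
    refine ENNReal.toReal_mono (hfin u hu) (measure_mono ?_)
    intro x hx
    exact lt_of_le_of_lt huv hx
  -- Z' nonpositive on positive reals
  have hZ'np : ∀ v : ℝ, 0 < v → Z' v ≤ 0 := by
    intro v hv
    have ht : Tendsto (slope Z v) (𝓝[>] v) (𝓝 (Z' v)) :=
      (hasDerivAt_iff_tendsto_slope.1 (hZ' v hv)).mono_left
        (nhdsWithin_mono v fun t ht => (ne_of_gt ht : t ≠ v))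
    refine le_of_tendsto ht ?_
    filter_upwards [self_mem_nhdsWithin] with t (ht : v < t)
    have h1 : Z t - Z v ≤ 0 := sub_nonpos.2 (hZanti v t hv ht.le)
    have h2 : 0 < t - v := sub_pos.2 ht
    rw [slope_def_field]
    exact div_nonpos_of_nonpos_of_nonneg h1 h2.le
  -- map measure on superlevel sets
  have hmap : ∀ a : ℝ, (Measure.map f μf) (Ioi a)
      = ∫⁻ x in {x | a < f x}, ENNReal.ofReal (f x) := by
    intro a
    rw [Measure.map_apply hf measurableSet_Ioi]
    have hpre : f ⁻¹' Ioi a = {x | a < f x} := rfl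
    rw [hpre, hμfdef, withDensity_apply _ (hmeas a)]
  -- layer cake identity
  have layer : ∀ a : ℝ, 0 < a → ∫⁻ x in {x | a < f x}, ENNReal.ofReal (f x)
      = ENNReal.ofReal (a * Z a) + ∫⁻ t in Ioi a, ENNReal.ofReal (Z t) := by
    intro a ha
    have h0 : ∫⁻ x in {x | a < f x}, ENNReal.ofReal (f x)
        = ∫⁻ t in Ioi 0, (volume.restrict {x | a < f x}) {x | t < f x} :=
      lintegral_eq_lintegral_meas_lt _ (Filter.Eventually.of_forall hfnn) hf.aemeasurable
    have hsplit : Ioi (0:ℝ) = Ioc 0 a ∪ Ioi a := (Ioc_union_Ioi_eq_Ioi ha.le).symm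
    rw [h0, hsplit, lintegral_union measurableSet_Ioi (Ioc_disjoint_Ioi le_rfl)]
    congr 1
    · have : ∫⁻ t in Ioc (0:ℝ) a, (volume.restrict {x | a < f x}) {x | t < f x}
          = ∫⁻ _ in Ioc (0:ℝ) a, ENNReal.ofReal (Z a) := by
        refine setLIntegral_congr_fun measurableSet_Ioc
          (fun t ht => ?_)
        rw [Measure.restrict_apply (hmeas t)]
        have hsub : {x | a < f x} ⊆ {x | t < f x} := fun x hx => lt_of_le_of_lt ht.2 hx
        rw [inter_eq_self_of_subset_right hsub, ← hofZ a ha]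
      rw [this, setLIntegral_const, Real.volume_Ioc, sub_zero,
        ← ENNReal.ofReal_mul (hZnn a), mul_comm]
    · refine setLIntegral_congr_fun measurableSet_Ioi
        (fun t ht => ?_)
      rw [Measure.restrict_apply (hmeas t)]
      have hsub : {x | t < f x} ⊆ {x | a < f x} := fun x hx => lt_trans (mem_Ioi.1 ht) hx
      rw [inter_eq_self_of_subset_left hsub, ← hofZ t (ha.trans ht)]
  -- μf is a probability-like measure
  have hμfuniv : μf Set.univ = 1 := by
    rw [hμfdef, withDensity_apply _ MeasurableSet.univ, Measure.restrict_univ, hfdens]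
  -- integrability of Z on (a, ∞) for a > 0
  have hZint : ∀ a : ℝ, 0 < a → IntegrableOn Z (Ioi a) := by
    intro a ha
    have hcont : ContinuousOn Z (Ioi a) := fun v hv =>
      ((hZ' v (ha.trans hv)).continuousAt).continuousWithinAt
    have hsm : AEStronglyMeasurable Z (volume.restrict (Ioi a)) :=
      (hcont.aemeasurable measurableSet_Ioi).aestronglyMeasurable
    refine ⟨hsm, (hasFiniteIntegral_iff_ofReal
      (Filter.Eventually.of_forall fun t => hZnn t)).2 ?_⟩
    have hle : ∫⁻ t in Ioi a, ENNReal.ofReal (Z t)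
        ≤ ENNReal.ofReal (a * Z a) + ∫⁻ t in Ioi a, ENNReal.ofReal (Z t) := le_add_self
    rw [← layer a ha] at hle
    refine lt_of_le_of_lt (hle.trans ((setLIntegral_le_lintegral _ _))) ?_
    rw [hfdens]; exact ENNReal.one_lt_top
  -- splitting the integral of Z over Ioi
  have hIoisplit : ∀ b t : ℝ, 0 < b → b ≤ t →
      (∫ s in Ioi b, Z s) = (∫ s in b..t, Z s) + ∫ s in Ioi t, Z s := by
    intro b t hb hbt
    rw [intervalIntegral.integral_of_le hbt, ← setIntegral_union (Ioc_disjoint_Ioi le_rfl)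
      measurableSet_Ioi ((hZint b hb).mono_set Ioc_subset_Ioi_self)
      ((hZint b hb).mono_set (Ioi_subset_Ioi hbt)), Ioc_union_Ioi_eq_Ioi hbt]
  -- tail of t * Z t
  have htZ : Tendsto (fun t : ℝ => t * Z t) atTop (𝓝 0) := by
    -- bound : t * Z t ≤ (μf {x | t < f x}).toReal for t > 0
    have hbd : ∀ t : ℝ, 0 < t → t * Z t ≤ (μf {x | t < f x}).toReal := by
      intro t ht
      have h1 : ENNReal.ofReal t * volume {x | t < f x} ≤ μf {x | t < f x} := by
        rw [hμfdef, withDensity_apply _ (hmeas t), ← setLIntegral_const]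
        refine setLIntegral_mono hf.ennreal_ofReal fun x hx => ?_
        exact ENNReal.ofReal_le_ofReal (le_of_lt hx)
      have h2 : ENNReal.ofReal (t * Z t) ≤ μf {x | t < f x} := by
        rw [ENNReal.ofReal_mul ht.le, hofZ t ht]
        exact h1
      have hne : μf {x | t < f x} ≠ ⊤ := by
        refine ne_top_of_le_ne_top (by rw [hμfuniv]; exact ENNReal.one_ne_top)
          (measure_mono (subset_univ _))
      calc t * Z t = (ENNReal.ofReal (t * Z t)).toReal :=
            (ENNReal.toReal_ofReal (mul_nonneg ht.le (hZnn t))).symm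
        _ ≤ (μf {x | t < f x}).toReal := ENNReal.toReal_mono hne h2
    have hμtail : Tendsto (fun t : ℝ => μf {x | t < f x}) atTop (𝓝 0) := by
      have hnat : Tendsto (fun n : ℕ => μf {x | (n : ℝ) < f x}) atTop
          (𝓝 (μf (⋂ n : ℕ, {x | (n : ℝ) < f x}))) := by
        refine tendsto_measure_iInter_atTop (fun n => (hmeas _).nullMeasurableSet)
          (fun m n hmn => ?_) ⟨0, ?_⟩
        · intro x hx
          have hx' : (n : ℝ) < f x := hx
          exact lt_of_le_of_lt (by exact_mod_cast hmn : (m:ℝ) ≤ n) hx'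
        · exact ne_top_of_le_ne_top (by rw [hμfuniv]; exact ENNReal.one_ne_top)
            (measure_mono (subset_univ _))
      have hempty : (⋂ n : ℕ, {x | (n : ℝ) < f x}) = ∅ := by
        ext x
        simp only [mem_iInter, mem_setOf_eq, mem_empty_iff_false, iff_false, not_forall, not_lt]
        obtain ⟨n, hn⟩ := exists_nat_ge (f x)
        exact ⟨n, hn⟩
      rw [hempty, measure_empty] at hnat
      have hcomp : Tendsto (fun t : ℝ => μf {x | ((⌊t⌋₊ : ℕ) : ℝ) < f x}) atTop (𝓝 0) :=
        hnat.comp tendsto_nat_floor_atTop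
      refine tendsto_of_tendsto_of_tendsto_of_le_of_le' tendsto_const_nhds hcomp ?_ ?_
      · exact Filter.Eventually.of_forall fun t => zero_le
      · filter_upwards [eventually_ge_atTop (0:ℝ)] with t ht
        exact measure_mono fun x hx => lt_of_le_of_lt (Nat.floor_le ht) hx
    have htoReal : Tendsto (fun t : ℝ => (μf {x | t < f x}).toReal) atTop (𝓝 0) := by
      have := (ENNReal.tendsto_toReal (a := 0) (by simp)).comp hμtail
      simpa [Function.comp_def] using this
    refine tendsto_of_tendsto_of_tendsto_of_le_of_le' tendsto_const_nhds htoReal ?_ ?_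
    · filter_upwards [eventually_gt_atTop (0:ℝ)] with t ht
      exact mul_nonneg ht.le (hZnn t)
    · filter_upwards [eventually_gt_atTop (0:ℝ)] with t ht
      exact hbd t ht
  -- the key real integral computation
  have key : ∀ a : ℝ, 0 < a →
      IntegrableOn (fun t => -(t * Z' t)) (Ioi a) ∧
      (∫ t in Ioi a, -(t * Z' t)) = a * Z a + ∫ t in Ioi a, Z t := by
    intro a ha
    set a' : ℝ := a / 2 with ha'def
    have ha' : 0 < a' := by positivity
    have ha'a : a' < a := by rw [ha'def]; linarith
    set G : ℝ → ℝ := fun t => -(t * Z t) - ∫ s in Ioi t, Z s with hGdef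
    have hGderiv : ∀ t ∈ Ici a, HasDerivAt G (-(t * Z' t)) t := by
      intro t ht
      have ht0 : 0 < t := lt_of_lt_of_le ha ht
      have ht' : a' < t := lt_of_lt_of_le ha'a ht
      have h1 : HasDerivAt (fun t => t * Z t) (1 * Z t + t * Z' t) t :=
        (hasDerivAt_id t).mul (hZ' t ht0)
      -- the tail integral function
      have hcont' : ContinuousOn Z (Ioi a') := fun v hv =>
        ((hZ' v (ha'.trans hv)).continuousAt).continuousWithinAt
      have hFTC : HasDerivAt (fun u => ∫ s in a'..u, Z s) (Z t) t := by
        refine intervalIntegral.integral_hasDerivAt_right ?_ ?_ (hZ' t ht0).continuousAt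
        · rw [intervalIntegrable_iff_integrableOn_Ioc_of_le ht'.le]
          exact (hZint a' ha').mono_set Ioc_subset_Ioi_self
        · exact ContinuousOn.stronglyMeasurableAtFilter isOpen_Ioi hcont' t ht'
      have h2 : HasDerivAt (fun u => ∫ s in Ioi u, Z s) (-(Z t)) t := by
        have h3 : HasDerivAt (fun u => (∫ s in Ioi a', Z s) - ∫ s in a'..u, Z s) (-(Z t)) t :=
          hFTC.const_sub _
        refine h3.congr_of_eventuallyEq ?_
        filter_upwards [isOpen_Ioi.mem_nhds ht'] with u (hu : a' < u)
        rw [hIoisplit a' u ha' hu.le]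
        ring
      have := (h1.neg).sub h2
      exact this.congr_deriv (by ring)
    have hGtend : Tendsto G atTop (𝓝 0) := by
      have hW : Tendsto (fun t : ℝ => ∫ s in Ioi t, Z s) atTop (𝓝 0) := by
        have h4 : Tendsto (fun t : ℝ => ∫ s in a..t, Z s) atTop
            (𝓝 (∫ s in Ioi a, Z s)) :=
          intervalIntegral_tendsto_integral_Ioi a (hZint a ha) tendsto_id
        have h5 : Tendsto (fun t : ℝ => (∫ s in Ioi a, Z s) - ∫ s in a..t, Z s) atTop
            (𝓝 ((∫ s in Ioi a, Z s) - ∫ s in Ioi a, Z s)) :=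
          tendsto_const_nhds.sub h4
        rw [sub_self] at h5
        refine h5.congr' ?_
        filter_upwards [eventually_ge_atTop a] with t ht
        rw [hIoisplit a t ha ht]
        ring
      have := (htZ.neg).sub hW
      simpa using this
    have hG'nn : ∀ t ∈ Ioi a, 0 ≤ -(t * Z' t) := by
      intro t ht
      have ht0 : 0 < t := ha.trans ht
      exact neg_nonneg.2 (mul_nonpos_of_nonneg_of_nonpos ht0.le (hZ'np t ht0))
    constructor
    · exact integrableOn_Ioi_deriv_of_nonneg' hGderiv hG'nn hGtend
    · have := integral_Ioi_of_hasDerivAt_of_nonneg' hGderiv hG'nn hGtend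
      rw [this, hGdef]
      ring
  -- core identity on Ioi a, a > 0
  have core : ∀ a : ℝ, 0 < a → (Measure.map f μf) (Ioi a) = ρ (Ioi a) := by
    intro a ha
    obtain ⟨hint, hval⟩ := key a ha
    have hρa : ρ (Ioi a) = ∫⁻ t in Ioi a, ENNReal.ofReal (-(t * Z' t)) := by
      rw [hρdef, withDensity_apply _ measurableSet_Ioi]
      refine setLIntegral_congr_fun measurableSet_Ioi
        (fun t ht => ?_)
      exact indicator_of_mem (ha.trans ht : t ∈ Ioi (0:ℝ)) _
    have hnn : 0 ≤ᵐ[volume.restrict (Ioi a)] fun t => -(t * Z' t) := by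
      refine (ae_restrict_iff' measurableSet_Ioi).2 (Filter.Eventually.of_forall fun t ht => ?_)
      have ht0 : 0 < t := ha.trans ht
      exact neg_nonneg.2 (mul_nonpos_of_nonneg_of_nonpos ht0.le (hZ'np t ht0))
    have hZnn' : 0 ≤ᵐ[volume.restrict (Ioi a)] Z :=
      Filter.Eventually.of_forall fun t => hZnn t
    rw [hmap a, layer a ha, hρa,
      ← ofReal_integral_eq_lintegral_ofReal hint hnn, hval,
      ENNReal.ofReal_add (mul_nonneg ha.le (hZnn a)) (integral_nonneg fun t => hZnn t),
      ofReal_integral_eq_lintegral_ofReal (hZint a ha) hZnn']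
  -- identity on Ioi 0 by monotone union
  have hIoi0 : ∀ m : Measure ℝ, m (Ioi (0:ℝ)) = ⨆ n : ℕ, m (Ioi (1/(n+1) : ℝ)) := by
    intro m
    have hmono : Monotone fun n : ℕ => Ioi (1/(n+1) : ℝ) := by
      intro mm nn hmn
      refine Ioi_subset_Ioi (one_div_le_one_div_of_le (by positivity) ?_)
      exact_mod_cast by exact_mod_cast add_le_add_left (Nat.cast_le.2 hmn) 1
    have hunion : (⋃ n : ℕ, Ioi (1/(n+1) : ℝ)) = Ioi (0:ℝ) := by
      ext x
      simp only [mem_iUnion, mem_Ioi]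
      constructor
      · rintro ⟨n, hn⟩
        exact lt_trans (by positivity) hn
      · intro hx
        obtain ⟨n, hn⟩ := exists_nat_one_div_lt hx
        exact ⟨n, hn⟩
    rw [← hunion, (hmono.directed_le).measure_iUnion]
  have hcore0 : (Measure.map f μf) (Ioi (0:ℝ)) = ρ (Ioi (0:ℝ)) := by
    rw [hIoi0 (Measure.map f μf), hIoi0 ρ]
    refine iSup_congr fun n => core _ (by positivity)
  -- identity on all Ioi a
  have hIoiAll : ∀ a : ℝ, (Measure.map f μf) (Ioi a) = ρ (Ioi a) := by
    intro a
    rcases lt_trichotomy 0 a with ha | ha | ha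
    · exact core a ha
    · rw [← ha]; exact hcore0
    · -- a < 0
      have h1 : (Measure.map f μf) (Ioi a) = (Measure.map f μf) (Ioi 0) := by
        rw [hmap a, hmap 0]
        have hset : {x | a < f x} = {x | 0 < f x} ∪ {x | 0 < f x}ᶜ := by
          rw [union_compl_self]
          ext x
          simpa using lt_of_lt_of_le ha (hfnn x)
        rw [hset, lintegral_union (hmeas 0).compl (disjoint_compl_right)]
        have hzero : ∫⁻ x in {x | 0 < f x}ᶜ, ENNReal.ofReal (f x) = 0 := by
          have : ∫⁻ x in {x | 0 < f x}ᶜ, ENNReal.ofReal (f x)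
              = ∫⁻ _ in {x | 0 < f x}ᶜ, (0:ENNReal) := by
            refine setLIntegral_congr_fun (hmeas 0).compl
              (fun x hx => ?_)
            have : f x = 0 := le_antisymm (not_lt.1 hx) (hfnn x)
            simp [this]
          rw [this, lintegral_zero]
        rw [hzero, add_zero]
      have h2 : ρ (Ioi a) = ρ (Ioi 0) := by
        rw [hρdef, withDensity_apply _ measurableSet_Ioi, withDensity_apply _ measurableSet_Ioi]
        rw [lintegral_indicator measurableSet_Ioi, lintegral_indicator measurableSet_Ioi,
          Measure.restrict_restrict measurableSet_Ioi, Measure.restrict_restrict measurableSet_Ioi,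
          Ioi_inter_Ioi, Ioi_inter_Ioi, max_eq_left ha.le, max_self]
      rw [h1, h2, hcore0]
  -- finish via Iic extensionality
  have hmapuniv : (Measure.map f μf) Set.univ = 1 := by
    rw [Measure.map_apply hf MeasurableSet.univ, preimage_univ, hμfuniv]
  haveI : IsFiniteMeasure (Measure.map f μf) :=
    ⟨by rw [hmapuniv]; exact ENNReal.one_lt_top⟩
  -- total masses agree
  have hρIic0 : ρ (Iic (0:ℝ)) = 0 := by
    rw [hρdef, withDensity_apply _ measurableSet_Iic]
    have : ∫⁻ t in Iic (0:ℝ),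
        (Ioi (0:ℝ)).indicator (fun v => ENNReal.ofReal (-(v * Z' v))) t
        = ∫⁻ _ in Iic (0:ℝ), (0:ENNReal) := by
      refine setLIntegral_congr_fun measurableSet_Iic
        (fun t ht => ?_)
      exact indicator_of_notMem (by simpa using ht) _
    rw [this, lintegral_zero]
  have hmapIic0 : (Measure.map f μf) (Iic (0:ℝ)) = 0 := by
    rw [Measure.map_apply hf measurableSet_Iic]
    have hpre : f ⁻¹' Iic 0 = {x | 0 < f x}ᶜ := by
      ext x
      simp [not_lt]
    rw [hpre, hμfdef, withDensity_apply _ (hmeas 0).compl]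
    have : ∫⁻ x in {x | 0 < f x}ᶜ, ENNReal.ofReal (f x)
        = ∫⁻ _ in {x | 0 < f x}ᶜ, (0:ENNReal) := by
      refine setLIntegral_congr_fun (hmeas 0).compl
        (fun x hx => ?_)
      have : f x = 0 := le_antisymm (not_lt.1 hx) (hfnn x)
      simp [this]
    rw [this, lintegral_zero]
  have huniv : (Measure.map f μf) Set.univ = ρ Set.univ := by
    have h1 : Set.univ = Iic (0:ℝ) ∪ Ioi 0 := (Iic_union_Ioi).symm
    rw [h1, measure_union (Iic_disjoint_Ioi le_rfl) measurableSet_Ioi,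
      measure_union (Iic_disjoint_Ioi le_rfl) measurableSet_Ioi,
      hρIic0, hmapIic0, hIoiAll 0]
  refine Measure.ext_of_Iic (Measure.map f μf) ρ fun a => ?_
  have h1 : Iic a = (Ioi a)ᶜ := compl_Ioi.symm
  have hfin1 : (Measure.map f μf) (Ioi a) ≠ ⊤ :=
    ne_top_of_le_ne_top (by rw [hmapuniv]; exact ENNReal.one_ne_top)
      (measure_mono (subset_univ _))
  have hfin2 : ρ (Ioi a) ≠ ⊤ := by rw [← hIoiAll a]; exact hfin1
  rw [h1, measure_compl measurableSet_Ioi hfin1, measure_compl measurableSet_Ioi hfin2,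
    huniv, hIoiAll a]
end

section
/- For the weighted slice sampler with cumulative weight function $W(u) = Z(u)^{-1}$ (assumed to define a proper joint distribution), the likelihood-ordinate chain satisfies $\mathbb{P}(L(X_{n+1}) \leq y \mid L(X_n) = y) = 1/2$ for every $y$, and for $z < y$, $\mathbb{P}(L(X_{n+1}) \leq z \mid L(X_n) = y) = \frac{1}{2} Z(y)/Z(z)$. -/
open MeasureTheory Set

lemma score_weight_key (Z w : ℝ → ℝ) (y z : ℝ) (hy : 0 < y) (hz : 0 < z) (hzy : z ≤ y)
    (hZpos : ∀ u, 0 < u → 0 < Z u)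
    (hZanti : StrictAntiOn Z (Ioi 0))
    (hw : ∀ u ∈ Ioo (0 : ℝ) y, HasDerivAt (fun v => 1 / Z v) (w u) u)
    (hW : ∀ u ∈ Ioc (0 : ℝ) y, (∫ s in Ioo (0 : ℝ) u, w s) = 1 / Z u) :
    (∫ u in Ioo (0 : ℝ) z, (1 - Z z / Z u) * (w u / (1 / Z y)))
      = (1 / 2) * (Z y / Z z) := by
  have hZy : 0 < Z y := hZpos y hy
  have hZz : 0 < Z z := hZpos z hz
  -- w is integrable on Ioo 0 y
  have hint : IntegrableOn w (Ioo (0 : ℝ) y) := by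
    by_contra h
    have := hW y ⟨hy, le_refl y⟩
    rw [MeasureTheory.integral_undef h] at this
    have h2 : (0:ℝ) < 1 / Z y := by positivity
    linarith
  have hintz : IntegrableOn w (Ioo (0 : ℝ) z) :=
    hint.mono_set (Ioo_subset_Ioo le_rfl hzy)
  -- primitive F
  set F : ℝ → ℝ := fun u => ∫ s in (0:ℝ)..u, w s with hF
  have hFeq : ∀ u ∈ Ioc (0 : ℝ) y, F u = 1 / Z u := by
    intro u hu
    have : F u = ∫ s in Ioo (0:ℝ) u, w s := by
      rw [hF]
      simp only
      rw [intervalIntegral.integral_of_le hu.1.le, MeasureTheory.integral_Ioc_eq_integral_Ioo]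
    rw [this, hW u hu]
  have hintIcc : IntegrableOn w (uIcc (0:ℝ) z) := by
    rw [uIcc_of_le hz.le]
    rw [integrableOn_Icc_iff_integrableOn_Ioo]
    exact hintz
  have hFcont : ContinuousOn F (Icc (0:ℝ) z) := by
    have := intervalIntegral.continuousOn_primitive_interval hintIcc
    rwa [uIcc_of_le hz.le] at this
  have hFderiv : ∀ u ∈ Ioo (0:ℝ) z, HasDerivAt F (w u) u := by
    intro u hu
    have huy : u ∈ Ioo (0:ℝ) y := ⟨hu.1, lt_of_lt_of_le hu.2 hzy⟩
    have hev : F =ᶠ[nhds u] (fun v => 1 / Z v) := by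
      filter_upwards [Ioo_mem_nhds huy.1 huy.2] with v hv
      exact hFeq v ⟨hv.1, hv.2.le⟩
    exact ((hw u huy).congr_of_eventuallyEq hev).congr_deriv rfl
  -- the auxiliary function H
  set H : ℝ → ℝ := fun u => F u - Z z * (F u * F u / 2) with hH
  have hHcont : ContinuousOn H (Icc (0:ℝ) z) :=
    hFcont.sub (continuousOn_const.mul ((hFcont.mul hFcont).div_const 2))
  have hHderiv : ∀ u ∈ Ioo (0:ℝ) z,
      HasDerivAt H (w u - Z z * (w u * F u)) u := by
    intro u hu
    have h1 := hFderiv u hu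
    have : HasDerivAt H (w u - Z z * ((w u * F u + F u * w u) / 2)) u :=
      h1.sub (((h1.mul h1).div_const 2).const_mul (Z z))
    convert this using 1
    ring
  -- integrability of the derivative
  have hFm : AEStronglyMeasurable F (volume.restrict (Ioo (0:ℝ) z)) := by
    have : ContinuousOn F (Ioo (0:ℝ) z) := hFcont.mono Ioo_subset_Icc_self
    exact (ContinuousOn.aemeasurable this measurableSet_Ioo).aestronglyMeasurable
  have hwF_int : IntegrableOn (fun u => w u * F u) (Ioo (0:ℝ) z) := by
    refine Integrable.mono' (g := fun u => |w u| * (1 / Z z)) ?_ (hintz.aestronglyMeasurable.mul hFm) ?_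
    · exact hintz.abs.mul_const _
    · filter_upwards [ae_restrict_mem measurableSet_Ioo] with u hu
      have hFu : F u = 1 / Z u := hFeq u ⟨hu.1, (lt_of_lt_of_le hu.2 hzy).le⟩
      have hZu : 0 < Z u := hZpos u hu.1
      have hle : Z z ≤ Z u := (hZanti.le_iff_ge hz hu.1).mpr hu.2.le
      have h1 : (0:ℝ) ≤ F u := by rw [hFu]; positivity
      have h2 : F u ≤ 1 / Z z := by
        rw [hFu]
        exact one_div_le_one_div_of_le hZz hle
      rw [norm_mul, Real.norm_eq_abs, Real.norm_eq_abs, abs_of_nonneg h1]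
      exact mul_le_mul_of_nonneg_left h2 (abs_nonneg _)
  have hder_int : IntervalIntegrable (fun u => w u - Z z * (w u * F u)) volume 0 z := by
    rw [intervalIntegrable_iff_integrableOn_Ioo_of_le hz.le]
    exact hintz.sub (hwF_int.const_mul _)
  -- FTC
  have hFTC : (∫ u in (0:ℝ)..z, (w u - Z z * (w u * F u))) = H z - H 0 :=
    intervalIntegral.integral_eq_sub_of_hasDeriv_right_of_le hz.le hHcont
      (fun u hu => (hHderiv u hu).hasDerivWithinAt) hder_int
  have hF0 : F 0 = 0 := by simp [hF]
  have hFz : F z = 1 / Z z := hFeq z ⟨hz, hzy⟩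
  have hHz : H z - H 0 = 1 / (2 * Z z) := by
    rw [hH]; simp only [hF0, hFz]
    field_simp
    ring
  -- identify integrands
  have hcongr : (∫ u in Ioo (0 : ℝ) z, (1 - Z z / Z u) * (w u / (1 / Z y)))
      = ∫ u in Ioo (0 : ℝ) z, Z y * (w u - Z z * (w u * F u)) := by
    refine MeasureTheory.setIntegral_congr_fun measurableSet_Ioo ?_
    intro u hu
    have hFu : F u = 1 / Z u := hFeq u ⟨hu.1, (lt_of_lt_of_le hu.2 hzy).le⟩
    have hZu : (Z u) ≠ 0 := (hZpos u hu.1).ne'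
    simp only
    rw [hFu]
    field_simp
  rw [hcongr, MeasureTheory.integral_const_mul]
  have : (∫ u in Ioo (0 : ℝ) z, (w u - Z z * (w u * F u)))
      = ∫ u in (0:ℝ)..z, (w u - Z z * (w u * F u)) := by
    rw [intervalIntegral.integral_of_le hz.le, MeasureTheory.integral_Ioc_eq_integral_Ioo]
  rw [this, hFTC, hHz]
  field_simp

/-- For the weighted slice sampler with cumulative weight `W(u) = 1/Z(u)` (assumed proper),
the likelihood-ordinate chain satisfies `ℙ(L(Xₙ₊₁) ≤ y ∣ L(Xₙ) = y) = 1/2` and, for `z < y`,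
`ℙ(L(Xₙ₊₁) ≤ z ∣ L(Xₙ) = y) = (1/2) Z(y)/Z(z)`.  Here the transition kernel is
`∫_0^{y∧z} (1 - Z(z)/Z(u)) (w(u)/W(y)) du` with `w = W'` and `W(y) = 1/Z(y)`. -/
theorem score_weight_half_up_down (Z w : ℝ → ℝ) (y : ℝ) (hy : 0 < y)
    (hZpos : ∀ u, 0 < u → 0 < Z u)
    (hZanti : StrictAntiOn Z (Ioi 0))
    -- w is the derivative of the cumulative weight W(u) = 1/Z(u)
    (hw : ∀ u ∈ Ioo (0 : ℝ) y, HasDerivAt (fun v => 1 / Z v) (w u) u)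
    -- W(u) = 1/Z(u) is a proper cumulative weight function: W(u) = ∫_0^u w(s) ds
    (hW : ∀ u ∈ Ioc (0 : ℝ) y, (∫ s in Ioo (0 : ℝ) u, w s) = 1 / Z u) :
    (∫ u in Ioo (0 : ℝ) y, (1 - Z y / Z u) * (w u / (1 / Z y))) = 1 / 2
      ∧ ∀ z, 0 < z → z < y →
          (∫ u in Ioo (0 : ℝ) z, (1 - Z z / Z u) * (w u / (1 / Z y)))
            = (1 / 2) * (Z y / Z z) := by
  constructor
  · have := score_weight_key Z w y y hy hy le_rfl hZpos hZanti hw hW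
    rw [this, div_self (hZpos y hy).ne']
    ring
  · intro z hz hzy
    exact score_weight_key Z w y z hy hz hzy.le hZpos hZanti hw hW
end

section
/- Let $W(u) = 1/\max\{\eta, Z(u)\}$ for $\eta \in (0,1]$ with $Z$ continuous and strictly decreasing with $Z(0)=1$. Given $x$, let $T \sim \mathrm{Unif}(0, 1/\max\{\eta, Z(L(x))\})$, and set $u = 0$ if $T \leq 1$, otherwise $u = Z^{-1}(1/T)$. Then $u$ is a draw from the conditional density $w(u)\,\mathbb{I}\{0 \leq u \leq L(x)\}/W(L(x))$, where $w = W'$ (in the distributional sense, including an atom of $w$ at $0$ corresponding to the constant piece of $W$). -/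
open MeasureTheory Set

/-- Lemma 2 of the paper: with `W(u) = 1/max{η, Z(u)}`, drawing
`T ∼ Unif(0, 1/max{η, Z(L(x))})` and setting `u = 0` if `T ≤ 1`, else `u = Z⁻¹(1/T)`,
produces a draw from the conditional density `w(u) 𝕀{0 ≤ u ≤ L(x)}/W(L(x))` (with `w = W'`
in the distributional sense, including an atom at `0`); equivalently, the CDF of the draw is
`u ↦ W(u)/W(L(x))` on `[0, L(x)]`. -/
theorem slice_variable_sampler (η : ℝ) (hη : η ∈ Ioc (0 : ℝ) 1)
    (Z : ℝ → ℝ) (hZcont : Continuous Z) (hZanti : StrictAnti Z) (hZ0 : Z 0 = 1)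
    (Zinv : ℝ → ℝ) (hZinv : ∀ s, η ≤ s → s ≤ 1 → Z (Zinv s) = s)
    (hZinvMeas : Measurable Zinv)
    (W : ℝ → ℝ) (hW : ∀ u, W u = 1 / max η (Z u))
    (ℓ : ℝ) (hℓ : 0 < ℓ)  -- ℓ = L(x), the current likelihood value
    -- ν is the law of T ∼ Unif(0, 1/max{η, Z(ℓ)}) = Unif(0, W(ℓ))
    (ν : Measure ℝ)
    (hν : ν = (ENNReal.ofReal (W ℓ))⁻¹ • volume.restrict (Ioo 0 (W ℓ))) :
    ∀ u ∈ Icc (0 : ℝ) ℓ,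
      (Measure.map (fun t => if t ≤ 1 then (0 : ℝ) else Zinv (1 / t)) ν) (Iic u)
        = ENNReal.ofReal (W u / W ℓ) := by
  intro u hu
  obtain ⟨hu0, huℓ⟩ := hu
  obtain ⟨hη0, hη1⟩ := hη
  set f : ℝ → ℝ := fun t => if t ≤ 1 then (0 : ℝ) else Zinv (1 / t) with hf
  have hmeas : Measurable f := by
    apply Measurable.ite (measurableSet_le measurable_id measurable_const) measurable_const
    exact hZinvMeas.comp (measurable_const.div measurable_id)
  have hZu1 : Z u ≤ 1 := hZ0 ▸ hZanti.antitone hu0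
  have hZℓu : Z ℓ ≤ Z u := hZanti.antitone huℓ
  have hmaxu : 0 < max η (Z u) := lt_max_of_lt_left hη0
  have hmaxℓ : 0 < max η (Z ℓ) := lt_max_of_lt_left hη0
  have hmaxu1 : max η (Z u) ≤ 1 := max_le hη1 hZu1
  have hWu1 : 1 ≤ W u := by
    rw [hW, le_div_iff₀ hmaxu, one_mul]; exact hmaxu1
  have hWuℓ : W u ≤ W ℓ := by
    rw [hW, hW]
    exact one_div_le_one_div_of_le hmaxℓ (max_le_max le_rfl hZℓu)
  have hWℓ1 : 1 ≤ W ℓ := hWu1.trans hWuℓ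
  have hWℓpos : 0 < W ℓ := lt_of_lt_of_le one_pos hWℓ1
  have key : ∀ t : ℝ, 0 < t → t < W ℓ → (f t ≤ u ↔ t ≤ W u) := by
    intro t ht0 htℓ
    by_cases ht1 : t ≤ 1
    · simp [hf, ht1, hu0, ht1.trans hWu1]
    · push_neg at ht1
      have h1t : 1 / t < 1 := by rw [div_lt_one ht0]; exact ht1
      have h1t' : max η (Z ℓ) < 1 / t := by
        rw [lt_div_iff₀ ht0, mul_comm]
        rw [hW, lt_div_iff₀ hmaxℓ] at htℓ
        exact htℓ
      have hη1t : η ≤ 1 / t := le_of_lt (lt_of_le_of_lt (le_max_left _ _) h1t')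
      have hZZ : Z (Zinv (1 / t)) = 1 / t := hZinv _ hη1t h1t.le
      simp only [hf, if_neg (not_le.mpr ht1)]
      constructor
      · intro h
        have hZu : Z u ≤ 1 / t := hZZ ▸ hZanti.antitone h
        rw [hW, le_div_iff₀ hmaxu, ← le_div_iff₀' ht0]
        exact max_le hη1t hZu
      · intro h
        rw [hW, le_div_iff₀ hmaxu, ← le_div_iff₀' ht0] at h
        have hZu : Z u ≤ Z (Zinv (1 / t)) := by
          rw [hZZ]; exact (le_max_right η (Z u)).trans h
        exact hZanti.le_iff_ge.mp hZu
  have hset : f ⁻¹' (Iic u) ∩ Ioo 0 (W ℓ) = Iic (W u) ∩ Ioo 0 (W ℓ) := by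
    ext t
    simp only [mem_inter_iff, mem_preimage, mem_Iic, mem_Ioo]
    constructor
    · rintro ⟨h, h1, h2⟩; exact ⟨(key t h1 h2).mp h, h1, h2⟩
    · rintro ⟨h, h1, h2⟩; exact ⟨(key t h1 h2).mpr h, h1, h2⟩
  have hvol : volume (f ⁻¹' (Iic u) ∩ Ioo 0 (W ℓ)) = ENNReal.ofReal (W u) := by
    rw [hset]
    apply le_antisymm
    · calc volume (Iic (W u) ∩ Ioo 0 (W ℓ)) ≤ volume (Ioc 0 (W u)) := by
            apply measure_mono; rintro t ⟨h, h1, h2⟩; exact ⟨h1, h⟩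
        _ = ENNReal.ofReal (W u) := by rw [Real.volume_Ioc, sub_zero]
    · calc ENNReal.ofReal (W u) = volume (Ioo 0 (W u)) := by
            rw [Real.volume_Ioo, sub_zero]
        _ ≤ volume (Iic (W u) ∩ Ioo 0 (W ℓ)) := by
            apply measure_mono; rintro t ⟨h1, h2⟩
            exact ⟨h2.le, h1, lt_of_lt_of_le h2 hWuℓ⟩
  rw [Measure.map_apply hmeas measurableSet_Iic, hν, Measure.smul_apply,
    Measure.restrict_apply (hmeas measurableSet_Iic), smul_eq_mul, hvol,
    ENNReal.ofReal_div_of_pos hWℓpos, div_eq_mul_inv, mul_comm]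
end

section
/- Let $d \geq 1$, $\nu, \tau > 0$, $a = (\nu+d)/2$, $b = \nu/2 + 1$, $s = \nu\tau/2$. Then $\int_{\mathbb{R}^d} (1 + x^Tx/\nu)^{-a} \,(\tau/2\pi)^{d/2} e^{-\tau x^T x/2}\, dx = \frac{s^a}{\Gamma(a)} \int_0^\infty (t+1)^{b-a-1} t^{a-1} e^{-st}\, dt = s^a\, U(a, b, s)$, where $U$ is Kummer's confluent hypergeometric function of the second kind. -/
open MeasureTheory Set Real

lemma gauss_integrable (d : ℕ) {c : ℝ} (hc : 0 < c) :
    Integrable (fun x : EuclideanSpace ℝ (Fin d) ↦ Real.exp (-c * ‖x‖ ^ 2)) := by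
  have h := (GaussianFourier.integrable_cexp_neg_mul_sq_norm_add (V := EuclideanSpace ℝ (Fin d))
      (b := (c : ℂ)) (by simpa using hc) 0 0).norm
  refine h.congr (Filter.Eventually.of_forall fun x ↦ ?_)
  simp only []
  rw [Complex.norm_exp]
  norm_num [← Complex.ofReal_pow]

lemma gammaType_integrable {a r : ℝ} (ha : 0 < a) (hr : 0 < r) :
    IntegrableOn (fun t : ℝ ↦ t ^ (a - 1) * Real.exp (-(r * t))) (Ioi 0) := by
  have h := integrableOn_rpow_mul_exp_neg_mul_rpow
    (show (-1:ℝ) < a - 1 by linarith) (show (0:ℝ) < 1 by norm_num) hr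
  refine h.congr_fun (fun t ht ↦ ?_) measurableSet_Ioi
  beta_reduce
  rw [Real.rpow_one, neg_mul]

/-- Kummer's confluent hypergeometric function of the second kind,
`U(a,b,s) = (1/Γ(a)) ∫_0^∞ t^(a-1) (1+t)^(b-a-1) e^(-st) dt`. -/
noncomputable def kummerU (a b s : ℝ) : ℝ :=
  (1 / Real.Gamma a) * ∫ t in Ioi (0 : ℝ), t ^ (a - 1) * (1 + t) ^ (b - a - 1) * Real.exp (-s * t)

/-- The multivariate-t/normal marginal-likelihood integral in terms of the Kummer function:
`∫_{ℝ^d} (1 + xᵀx/ν)^(-a) (τ/2π)^(d/2) e^(-τ xᵀx/2) dx = s^a U(a,b,s)` with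
`a = (ν+d)/2`, `b = ν/2 + 1`, `s = ντ/2`. -/
theorem t_normal_integral_kummer (d : ℕ) (hd : 1 ≤ d) (ν τ : ℝ) (hν : 0 < ν) (hτ : 0 < τ)
    (a b s : ℝ) (ha : a = (ν + d) / 2) (hb : b = ν / 2 + 1) (hs : s = ν * τ / 2) :
    (∫ x : EuclideanSpace ℝ (Fin d),
        (1 + ‖x‖ ^ 2 / ν) ^ (-a) * ((τ / (2 * π)) ^ ((d : ℝ) / 2) * Real.exp (-τ * ‖x‖ ^ 2 / 2)))
      = (s ^ a / Real.Gamma a)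
          * ∫ t in Ioi (0 : ℝ), (t + 1) ^ (b - a - 1) * t ^ (a - 1) * Real.exp (-s * t)
    ∧ (∫ x : EuclideanSpace ℝ (Fin d),
        (1 + ‖x‖ ^ 2 / ν) ^ (-a) * ((τ / (2 * π)) ^ ((d : ℝ) / 2) * Real.exp (-τ * ‖x‖ ^ 2 / 2)))
      = s ^ a * kummerU a b s := by
  have hπ : (0:ℝ) < π := Real.pi_pos
  have hd0 : (0:ℝ) < d := by exact_mod_cast hd
  have ha0 : 0 < a := by rw [ha]; positivity
  have hs0 : 0 < s := by rw [hs]; positivity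
  have hΓ : 0 < Real.Gamma a := Real.Gamma_pos_of_pos ha0
  set E := EuclideanSpace ℝ (Fin d) with hE
  set C : ℝ := (τ / (2 * π)) ^ ((d : ℝ) / 2) with hC
  set F : E → ℝ → ℝ :=
    fun x t ↦ t ^ (a - 1) * Real.exp (-((1 + ‖x‖ ^ 2 / ν) * t)) * Real.exp (-τ * ‖x‖ ^ 2 / 2)
    with hF
  -- value of the inner t-integral
  have hval : ∀ x : E, (∫ t in Ioi (0:ℝ), F x t)
      = (1 + ‖x‖ ^ 2 / ν) ^ (-a) * Real.Gamma a * Real.exp (-τ * ‖x‖ ^ 2 / 2) := by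
    intro x
    have hr : 0 < 1 + ‖x‖ ^ 2 / ν := by positivity
    rw [hF]
    simp only []
    rw [integral_mul_const, Real.integral_rpow_mul_exp_neg_mul_Ioi ha0 hr]
    rw [one_div, Real.inv_rpow hr.le, ← Real.rpow_neg hr.le]
  -- integrability in t for each x
  have hFint : ∀ x : E, IntegrableOn (F x) (Ioi (0:ℝ)) := by
    intro x
    have hr : 0 < 1 + ‖x‖ ^ 2 / ν := by positivity
    exact (gammaType_integrable ha0 hr).mul_const _
  -- measurability on the product
  have hFmeas : AEStronglyMeasurable (fun p : E × ℝ ↦ F p.1 p.2)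
      ((volume : Measure E).prod (volume.restrict (Ioi 0))) := by
    apply Measurable.aestronglyMeasurable
    apply Measurable.mul
    apply Measurable.mul
    · exact measurable_snd.pow_const _
    · apply Measurable.exp
      apply Measurable.neg
      exact ((measurable_const.add ((measurable_fst.norm.pow_const 2).div_const ν)).mul
        measurable_snd)
    · apply Measurable.exp
      exact (((measurable_fst.norm.pow_const 2).const_mul (-τ)).div_const 2)
  -- product integrability
  have hprod : Integrable (fun p : E × ℝ ↦ F p.1 p.2)
      ((volume : Measure E).prod (volume.restrict (Ioi 0))) := by
    rw [MeasureTheory.integrable_prod_iff hFmeas]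
    refine ⟨Filter.Eventually.of_forall hFint, ?_⟩
    have heq : (fun x : E ↦ ∫ t in Ioi (0:ℝ), ‖F x t‖)
        = fun x ↦ (1 + ‖x‖ ^ 2 / ν) ^ (-a) * Real.Gamma a * Real.exp (-τ * ‖x‖ ^ 2 / 2) := by
      funext x
      rw [← hval x]
      refine setIntegral_congr_fun measurableSet_Ioi (fun t ht ↦ ?_)
      have ht' : (0:ℝ) < t := ht
      rw [Real.norm_eq_abs, abs_of_nonneg]
      rw [hF]; positivity
    rw [heq]
    refine Integrable.mono' (((gauss_integrable d (half_pos hτ)).const_mul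
      (Real.Gamma a))) ?_ (Filter.Eventually.of_forall fun x ↦ ?_)
    · apply Continuous.aestronglyMeasurable
      apply Continuous.mul
      apply Continuous.mul
      · apply Continuous.rpow_const
        · exact continuous_const.add ((continuous_norm.pow 2).div_const ν)
        · intro x
          left
          have : 0 < 1 + ‖x‖ ^ 2 / ν := by positivity
          exact this.ne'
      · exact continuous_const
      · fun_prop
    · have hr : 0 < 1 + ‖x‖ ^ 2 / ν := by positivity
      have h1 : (1 + ‖x‖ ^ 2 / ν) ^ (-a) ≤ 1 := by
        apply Real.rpow_le_one_of_one_le_of_nonpos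
        · nlinarith [sq_nonneg ‖x‖, div_nonneg (sq_nonneg ‖x‖) hν.le]
        · linarith
      have h2 : Real.exp (-τ * ‖x‖ ^ 2 / 2) = Real.exp (-(τ/2) * ‖x‖ ^ 2) := by
        ring_nf
      rw [Real.norm_eq_abs, abs_of_nonneg (by positivity), h2]
      have h3 : (0:ℝ) < Real.exp (-(τ/2) * ‖x‖ ^ 2) := Real.exp_pos _
      calc (1 + ‖x‖ ^ 2 / ν) ^ (-a) * Real.Gamma a * Real.exp (-(τ/2) * ‖x‖ ^ 2)
          ≤ 1 * Real.Gamma a * Real.exp (-(τ/2) * ‖x‖ ^ 2) := by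
            apply mul_le_mul_of_nonneg_right (mul_le_mul_of_nonneg_right h1 hΓ.le) h3.le
        _ = Real.Gamma a * Real.exp (-(τ/2) * ‖x‖ ^ 2) := by ring
  -- swap the integrals
  have hswap : (∫ x : E, ∫ t in Ioi (0:ℝ), F x t)
      = ∫ t in Ioi (0:ℝ), ∫ x : E, F x t := MeasureTheory.integral_integral_swap hprod
  -- inner Gaussian integral
  have hinner : ∀ t ∈ Ioi (0:ℝ), (∫ x : E, F x t)
      = t ^ (a - 1) * Real.exp (-t) * (π / (t / ν + τ / 2)) ^ ((d:ℝ) / 2) := by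
    intro t ht
    have ht' : (0:ℝ) < t := ht
    have hc : 0 < t / ν + τ / 2 := by positivity
    have hptw : ∀ x : E, F x t
        = (t ^ (a - 1) * Real.exp (-t)) * Real.exp (-(t / ν + τ / 2) * ‖x‖ ^ 2) := by
      intro x
      rw [hF]
      simp only []
      rw [mul_assoc, mul_assoc, ← Real.exp_add, ← Real.exp_add]
      congr 2
      field_simp
      ring
    simp_rw [hptw]
    rw [MeasureTheory.integral_const_mul, GaussianFourier.integral_rexp_neg_mul_sq_norm hc]
    have hfr : Module.finrank ℝ E = d := finrank_euclideanSpace_fin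
    rw [hfr]
  -- the main reduction
  have hmain : (∫ x : E, (1 + ‖x‖ ^ 2 / ν) ^ (-a) * (C * Real.exp (-τ * ‖x‖ ^ 2 / 2)))
      = C / Real.Gamma a * ∫ t in Ioi (0:ℝ),
          t ^ (a - 1) * Real.exp (-t) * (π / (t / ν + τ / 2)) ^ ((d:ℝ) / 2) := by
    have hptC : ∀ x : E, (1 + ‖x‖ ^ 2 / ν) ^ (-a) * (C * Real.exp (-τ * ‖x‖ ^ 2 / 2))
        = C / Real.Gamma a * ∫ t in Ioi (0:ℝ), F x t := by
      intro x
      rw [hval x]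
      field_simp
    simp_rw [hptC]
    rw [MeasureTheory.integral_const_mul, hswap]
    congr 1
    exact setIntegral_congr_fun measurableSet_Ioi hinner
  -- change of variables t ↦ s * t
  set g : ℝ → ℝ := fun u ↦ u ^ (a - 1) * Real.exp (-u) * (π / (u / ν + τ / 2)) ^ ((d:ℝ) / 2)
    with hg
  have hcv := MeasureTheory.integral_comp_mul_left_Ioi g 0 hs0
  rw [mul_zero] at hcv
  have hIg : (∫ u in Ioi (0:ℝ), g u) = s * ∫ t in Ioi (0:ℝ), g (s * t) := by
    rw [hcv, smul_eq_mul, ← mul_assoc, mul_inv_cancel₀ hs0.ne', one_mul]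
  have hba : b - a - 1 = -((d:ℝ) / 2) := by rw [ha, hb]; ring
  have hCs : C * (2 * π / τ) ^ ((d:ℝ)/2) = 1 := by
    rw [hC, ← Real.mul_rpow (by positivity) (by positivity)]
    rw [show τ / (2 * π) * (2 * π / τ) = 1 by field_simp]
    exact Real.one_rpow _
  have hpt2 : ∀ t ∈ Ioi (0:ℝ), C * s * g (s * t)
      = s ^ a * ((t + 1) ^ (b - a - 1) * t ^ (a - 1) * Real.exp (-s * t)) := by
    intro t ht
    have ht' : (0:ℝ) < t := ht
    have h1t : (0:ℝ) < t + 1 := by linarith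
    have e1 : s * t / ν + τ / 2 = τ / 2 * (t + 1) := by rw [hs]; field_simp
    have e2 : (s * t) ^ (a - 1) = s ^ (a - 1) * t ^ (a - 1) :=
      Real.mul_rpow hs0.le ht'.le
    have e3 : (π / (τ / 2 * (t + 1))) ^ ((d:ℝ)/2)
        = (2 * π / τ) ^ ((d:ℝ)/2) * (t + 1) ^ (b - a - 1) := by
      rw [show π / (τ / 2 * (t + 1)) = (2 * π / τ) * (t + 1)⁻¹ by field_simp]
      rw [Real.mul_rpow (by positivity) (by positivity), Real.inv_rpow h1t.le,
        ← Real.rpow_neg h1t.le, hba]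
    have e4 : s ^ a = s * s ^ (a - 1) := by
      have h := Real.rpow_add hs0 1 (a - 1)
      rw [Real.rpow_one] at h
      rw [show (1:ℝ) + (a - 1) = a by ring] at h
      exact h
    have e5 : Real.exp (-(s * t)) = Real.exp (-s * t) := by rw [neg_mul]
    rw [hg]
    simp only []
    rw [e1, e2, e3, e4, e5]
    linear_combination (s * s ^ (a - 1) * t ^ (a - 1) * Real.exp (-s * t)
      * (t + 1) ^ (b - a - 1)) * hCs
  have hsub : (∫ t in Ioi (0:ℝ), C * s * g (s * t))
      = ∫ t in Ioi (0:ℝ), s ^ a * ((t + 1) ^ (b - a - 1) * t ^ (a - 1) * Real.exp (-s * t)) :=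
    setIntegral_congr_fun measurableSet_Ioi hpt2
  have hfirst : (∫ x : E, (1 + ‖x‖ ^ 2 / ν) ^ (-a) * (C * Real.exp (-τ * ‖x‖ ^ 2 / 2)))
      = (s ^ a / Real.Gamma a)
          * ∫ t in Ioi (0 : ℝ), (t + 1) ^ (b - a - 1) * t ^ (a - 1) * Real.exp (-s * t) := by
    calc (∫ x : E, (1 + ‖x‖ ^ 2 / ν) ^ (-a) * (C * Real.exp (-τ * ‖x‖ ^ 2 / 2)))
        = C / Real.Gamma a * (s * ∫ t in Ioi (0:ℝ), g (s * t)) := by rw [hmain, hIg]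
      _ = (1 / Real.Gamma a) * ∫ t in Ioi (0:ℝ), C * s * g (s * t) := by
          simp_rw [mul_assoc (C) (s)]
          rw [MeasureTheory.integral_const_mul, MeasureTheory.integral_const_mul]
          ring
      _ = (1 / Real.Gamma a) * ∫ t in Ioi (0:ℝ),
            s ^ a * ((t + 1) ^ (b - a - 1) * t ^ (a - 1) * Real.exp (-s * t)) := by rw [hsub]
      _ = (s ^ a / Real.Gamma a)
            * ∫ t in Ioi (0 : ℝ), (t + 1) ^ (b - a - 1) * t ^ (a - 1) * Real.exp (-s * t) := by
          rw [MeasureTheory.integral_const_mul]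
          ring
  refine ⟨hfirst, ?_⟩
  rw [hfirst, kummerU]
  have hcomm : ∀ t : ℝ, t ^ (a - 1) * (1 + t) ^ (b - a - 1) * Real.exp (-s * t)
      = (t + 1) ^ (b - a - 1) * t ^ (a - 1) * Real.exp (-s * t) := by
    intro t
    rw [add_comm 1 t]
    ring
  simp_rw [hcomm]
  ring
end
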